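/- Let n ≥ 1 and let x_i = cos((2i − 1)π/(2n)) for i = 1, …, n be the Gauss–Chebyshev nodes of the first kind. Then for every real polynomial p of degree at most 2n − 1, ∫_{−1}^{1} p(x) (1 − x²)^{−1/2} dx = (π/n) Σ_{i=1}^{n} p(x_i). That is, the n-point Gauss–Chebyshev quadrature rule of the first kind, with equal weights π/n, is exact on all polynomials of degree up to 2n − 1. -/

import Mathlib

open Real MeasureTheory intervalIntegral

open Polynomial Polynomial.Chebyshev in
private lemma T_deg (k : ℕ) : (T ℝ k).natDegree = k ∧ (T ℝ k).leadingCoeff = 2 ^ (k - 1) := by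
  induction k using Nat.twoStepInduction with
  | zero => simp
  | one => simp
  | more k ih2 ih1 =>
    push_cast at ih1 ih2 ⊢
    obtain ⟨hd, hl⟩ := ih1
    obtain ⟨hd', hl'⟩ := ih2
    have hT : T ℝ ((k:ℤ) + 2) = 2 * X * T ℝ ((k:ℤ) + 1) - T ℝ (k:ℤ) := T_add_two ℝ k
    have hTne : T ℝ ((k:ℤ) + 1) ≠ 0 := by
      intro h; rw [h] at hd; simp at hd
    have h2X : (2 * X : ℝ[X]) ≠ 0 := by
      intro h
      have := natDegree_smul_le (2:ℝ) (X : ℝ[X])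
      have h1 : (2 * X : ℝ[X]).coeff 1 = 2 := by simp
      rw [h] at h1; simp at h1
    have hA : (2 * X * T ℝ ((k:ℤ) + 1)).natDegree = k + 2 := by
      rw [natDegree_mul h2X hTne, hd]
      have : (2 * X : ℝ[X]).natDegree = 1 := by
        rw [show (2 * X : ℝ[X]) = C 2 * X by rw [map_ofNat], natDegree_C_mul (by norm_num)]
        exact natDegree_X
      omega
    have hAl : (2 * X * T ℝ ((k:ℤ) + 1)).leadingCoeff = 2 ^ (k + 1) := by
      rw [leadingCoeff_mul, hl]
      have : (2 * X : ℝ[X]).leadingCoeff = 2 := by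
        rw [show (2 * X : ℝ[X]) = C 2 * X by rw [map_ofNat], leadingCoeff_mul]; simp
      rw [this]
      ring
    have hdeglt : (T ℝ (k:ℤ)).degree < (2 * X * T ℝ ((k:ℤ) + 1)).degree := by
      have hAne : (2 * X * T ℝ ((k:ℤ) + 1)) ≠ 0 := mul_ne_zero h2X hTne
      rw [degree_eq_natDegree hAne, hA]
      calc (T ℝ (k:ℤ)).degree ≤ (T ℝ (k:ℤ)).natDegree := degree_le_natDegree
        _ < ((k + 2 : ℕ) : WithBot ℕ) := by rw [hd']; exact_mod_cast by omega
    have hnd : (T ℝ (k:ℤ)).natDegree < (2 * X * T ℝ ((k:ℤ) + 1)).natDegree := by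
      rw [hA, hd']; omega
    constructor
    · rw [hT, natDegree_sub_eq_left_of_natDegree_lt hnd, hA]
    · rw [hT, leadingCoeff_sub_of_degree_lt hdeglt, hAl]

lemma cos_image_Ioo : Real.cos '' Set.Ioo 0 π = Set.Ioo (-1 : ℝ) 1 := by
  ext y
  constructor
  · rintro ⟨θ, ⟨h0, hπ⟩, rfl⟩
    constructor
    · have := Real.strictAntiOn_cos (Set.mem_Icc.mpr ⟨le_of_lt h0, le_of_lt hπ⟩)
        (Set.mem_Icc.mpr ⟨le_of_lt (lt_trans h0 hπ), le_refl π⟩) hπ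
      simpa [Real.cos_pi] using this
    · have := Real.strictAntiOn_cos (Set.mem_Icc.mpr ⟨le_refl 0, le_of_lt (lt_trans h0 hπ)⟩)
        (Set.mem_Icc.mpr ⟨le_of_lt h0, le_of_lt hπ⟩) h0
      simpa [Real.cos_zero] using this
  · rintro ⟨h1, h2⟩
    exact ⟨Real.arccos y, ⟨Real.arccos_pos.mpr h2, by rw [Real.arccos_eq_pi_div_two_sub_arcsin]; have := Real.neg_pi_div_two_lt_arcsin.mpr h1; linarith⟩,
      Real.cos_arccos (le_of_lt h1) (le_of_lt h2)⟩

lemma cov (p : Polynomial ℝ) :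
    ∫ x in (-1:ℝ)..1, p.eval x * (1 - x ^ 2) ^ (-(1:ℝ)/2)
      = ∫ θ in (0:ℝ)..π, p.eval (Real.cos θ) := by
  rw [intervalIntegral.integral_of_le (by norm_num : (-1:ℝ) ≤ 1),
    intervalIntegral.integral_of_le Real.pi_nonneg,
    MeasureTheory.integral_Ioc_eq_integral_Ioo, MeasureTheory.integral_Ioc_eq_integral_Ioo,
    ← cos_image_Ioo]
  rw [integral_image_eq_integral_abs_deriv_smul measurableSet_Ioo
    (fun x _ => (Real.hasDerivAt_cos x).hasDerivWithinAt)
    (Real.injOn_cos.mono Set.Ioo_subset_Icc_self)]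
  apply MeasureTheory.setIntegral_congr_fun measurableSet_Ioo
  intro θ hθ
  obtain ⟨h0, hπ⟩ := hθ
  have hs : 0 < Real.sin θ := Real.sin_pos_of_pos_of_lt_pi h0 hπ
  have h1 : (1 : ℝ) - Real.cos θ ^ 2 = Real.sin θ ^ 2 := by
    have := Real.sin_sq_add_cos_sq θ; linarith
  have h2 : (Real.sin θ ^ 2 : ℝ) ^ (-(1:ℝ)/2) = (Real.sin θ)⁻¹ := by
    rw [← Real.rpow_natCast (Real.sin θ) 2, ← Real.rpow_mul hs.le]
    norm_num
    exact Real.rpow_neg_one _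
  simp only [smul_eq_mul, h1, h2, abs_neg, abs_of_pos hs]
  field_simp

section GCaux
open Polynomial Polynomial.Chebyshev

lemma sum_cos_odd (N : ℕ) (x : ℝ) :
    (∑ i ∈ Finset.Icc 1 N, Real.cos ((2 * (i:ℝ) - 1) * x)) * (2 * Real.sin x)
      = Real.sin (2 * N * x) := by
  induction N with
  | zero => simp
  | succ N ih =>
    rw [Finset.sum_Icc_succ_top (by omega : 1 ≤ N + 1), add_mul, ih]
    have h := Real.sin_sub_sin (2 * (N+1) * x) (2 * N * x)
    have h2 : (2 * ((N:ℝ)+1) * x - 2 * N * x) / 2 = x := by ring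
    have h3 : (2 * ((N:ℝ)+1) * x + 2 * N * x) / 2 = (2 * ((N:ℝ)+1) - 1) * x := by ring
    rw [h2, h3] at h
    push_cast
    linarith [h]

lemma chebQuad (n m : ℕ) (hn : 1 ≤ n) (hm : m ≤ 2 * n - 1) :
    ∫ θ in (0:ℝ)..π, (T ℝ m).eval (Real.cos θ)
      = (π / n) * ∑ i ∈ Finset.Icc 1 n,
          (T ℝ m).eval (Real.cos ((2 * (i:ℝ) - 1) * π / (2 * n))) := by
  have hTc : ∀ θ : ℝ, (T ℝ m).eval (Real.cos θ) = Real.cos ((m:ℝ) * θ) := by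
    intro θ
    have := Polynomial.Chebyshev.T_real_cos θ (m : ℤ)
    push_cast at this
    exact this
  simp only [hTc]
  rcases Nat.eq_zero_or_pos m with hm0 | hm1
  · subst hm0
    simp
    field_simp
  · -- LHS = 0
    have hc : (m:ℝ) ≠ 0 := by positivity
    have hL : ∫ θ in (0:ℝ)..π, Real.cos ((m:ℝ) * θ) = 0 := by
      rw [intervalIntegral.integral_comp_mul_left Real.cos hc]
      simp [Real.sin_nat_mul_pi]
    -- RHS sum = 0
    have hsum : ∑ i ∈ Finset.Icc 1 n,
        Real.cos ((m:ℝ) * ((2 * (i:ℝ) - 1) * π / (2 * n))) = 0 := by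
      have hrw : ∀ i ∈ Finset.Icc 1 n,
          Real.cos ((m:ℝ) * ((2 * (i:ℝ) - 1) * π / (2 * n)))
            = Real.cos ((2 * (i:ℝ) - 1) * ((m:ℝ) * π / (2 * n))) := by
        intro i _; congr 1; ring
      rw [Finset.sum_congr rfl hrw]
      set x : ℝ := (m:ℝ) * π / (2 * n) with hx
      have hn' : (0:ℝ) < n := by exact_mod_cast hn
      have hxpos : 0 < x := by positivity
      have hxlt : x < π := by
        rw [hx, div_lt_iff₀ (by positivity)]
        have : (m:ℝ) < 2 * n := by
          have : m < 2 * n := by omega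
          exact_mod_cast this
        nlinarith [Real.pi_pos]
      have hsin : Real.sin x ≠ 0 :=
        ne_of_gt (Real.sin_pos_of_pos_of_lt_pi hxpos hxlt)
      have hkey := sum_cos_odd n x
      have h2nx : Real.sin (2 * n * x) = 0 := by
        have : 2 * (n:ℝ) * x = (m:ℝ) * π := by
          rw [hx, mul_div_assoc']; exact mul_div_cancel_left₀ _ (mul_ne_zero two_ne_zero hn'.ne')
        rw [this, Real.sin_nat_mul_pi]
      rw [h2nx] at hkey
      have h2s : (2 * Real.sin x) ≠ 0 := by positivity
      exact (mul_eq_zero.mp hkey).resolve_right h2s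
    rw [hL, hsum, mul_zero]

lemma mainQuad (n : ℕ) (hn : 1 ≤ n) :
    ∀ d : ℕ, ∀ p : Polynomial ℝ, p.natDegree ≤ d → p.degree ≤ (2 * n - 1 : ℕ) →
    ∫ θ in (0:ℝ)..π, p.eval (Real.cos θ)
      = (π / n) * ∑ i ∈ Finset.Icc 1 n,
          p.eval (Real.cos ((2 * (i:ℝ) - 1) * π / (2 * n))) := by
  intro d
  induction d with
  | zero =>
    intro p hpd _
    have hp : p = C (p.coeff 0) := Polynomial.eq_C_of_natDegree_le_zero hpd
    rw [hp]
    simp only [eval_C, Finset.sum_const, Nat.card_Icc, intervalIntegral.integral_const,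
      smul_eq_mul, nsmul_eq_mul]
    have hn' : (n:ℝ) ≠ 0 := by positivity
    field_simp
    simp only [Nat.add_sub_cancel, Nat.add_sub_cancel_left]
    ring
  | succ d ih =>
    intro p hpd hdeg
    by_cases hp0 : p = 0
    · simp [hp0]
    by_cases hle : p.natDegree ≤ d
    · exact ih p hle hdeg
    have hk : p.natDegree = d + 1 := by omega
    set k := p.natDegree with hkdef
    obtain ⟨hTd, hTl⟩ := T_deg k
    set c : ℝ := p.leadingCoeff / 2 ^ (k - 1) with hc
    have hlc : p.leadingCoeff ≠ 0 := Polynomial.leadingCoeff_ne_zero.mpr hp0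
    have h2 : (2:ℝ) ^ (k - 1) ≠ 0 := by positivity
    have hcne : c ≠ 0 := div_ne_zero hlc h2
    set q : Polynomial ℝ := p - C c * T ℝ k with hq
    have hCT0 : (C c * T ℝ k) ≠ 0 := by
      apply mul_ne_zero (by simpa using hcne)
      intro h
      rw [h] at hTl; simp at hTl
      exact h2 hTl.symm
    have hdegCT : (C c * T ℝ k).degree = p.degree := by
      rw [degree_eq_natDegree hCT0, degree_eq_natDegree hp0]
      congr 1
      rw [natDegree_mul (by simpa using hcne) (fun h => by rw [h] at hTl; simp at hTl; exact h2 hTl.symm)]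
      simp [hTd]
      exact hkdef
    have hlcCT : (C c * T ℝ k).leadingCoeff = p.leadingCoeff := by
      rw [leadingCoeff_mul, leadingCoeff_C, hTl, hc]
      field_simp
    have hqdeg : q.degree < p.degree := by
      have := Polynomial.degree_sub_lt hdegCT.symm hp0 hlcCT.symm
      simpa [hq] using this
    have hqnd : q.natDegree ≤ d := by
      by_cases hq0 : q = 0
      · simp [hq0]
      · have := Polynomial.natDegree_lt_natDegree hq0 hqdeg
        omega
    have hqdeg2n : q.degree ≤ (2 * n - 1 : ℕ) := le_of_lt (lt_of_lt_of_le hqdeg hdeg)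
    have hk2n : k ≤ 2 * n - 1 := Polynomial.natDegree_le_iff_degree_le.mpr hdeg
    have hpeq : ∀ x : ℝ, p.eval x = q.eval x + c * (T ℝ k).eval x := by
      intro x
      simp [hq, sub_eq_iff_eq_add]
    have hiq := ih q hqnd hqdeg2n
    have hiT := chebQuad n k hn hk2n
    calc ∫ θ in (0:ℝ)..π, p.eval (Real.cos θ)
        = ∫ θ in (0:ℝ)..π, (q.eval (Real.cos θ) + c * (T ℝ k).eval (Real.cos θ)) := by
          apply intervalIntegral.integral_congr; intro θ _; exact hpeq _
      _ = (∫ θ in (0:ℝ)..π, q.eval (Real.cos θ))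
            + c * ∫ θ in (0:ℝ)..π, (T ℝ k).eval (Real.cos θ) := by
          rw [intervalIntegral.integral_add, intervalIntegral.integral_const_mul]
          · exact ((q.continuous_aeval.comp Real.continuous_cos).intervalIntegrable _ _)
          · exact (continuous_const.mul ((T ℝ k).continuous_aeval.comp Real.continuous_cos)).intervalIntegrable _ _
      _ = (π / n) * ∑ i ∈ Finset.Icc 1 n,
            p.eval (Real.cos ((2 * (i:ℝ) - 1) * π / (2 * n))) := by
          rw [hiq, hiT]
          have hs : ∑ i ∈ Finset.Icc 1 n, p.eval (Real.cos ((2 * (i:ℝ) - 1) * π / (2 * n)))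
              = ∑ i ∈ Finset.Icc 1 n, (q.eval (Real.cos ((2 * (i:ℝ) - 1) * π / (2 * n)))
                  + c * (T ℝ k).eval (Real.cos ((2 * (i:ℝ) - 1) * π / (2 * n)))) :=
            Finset.sum_congr rfl (fun i _ => hpeq _)
          rw [hs, Finset.sum_add_distrib, ← Finset.mul_sum]
          ring

end GCaux

/-- The `n`-point Gauss–Chebyshev quadrature rule of the first kind, with nodes
`cos ((2i - 1)π / (2n))` and equal weights `π / n`, is exact on all real polynomials
of degree at most `2n - 1` for the weight `(1 - x²)^(-1/2)` on `(-1, 1)`. -/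
theorem gauss_chebyshev_first_kind_exact
    (n : ℕ) (hn : 1 ≤ n) (p : Polynomial ℝ)
    (hdeg : p.degree ≤ (2 * n - 1 : ℕ)) :
    ∫ x in (-1:ℝ)..1, p.eval x * (1 - x ^ 2) ^ (-(1:ℝ)/2)
      = (Real.pi / n) *
        ∑ i ∈ Finset.Icc 1 n, p.eval (Real.cos ((2 * (i:ℝ) - 1) * Real.pi / (2 * n))) := by
  rw [cov p]
  exact mainQuad n hn p.natDegree p le_rfl hdeg
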